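/- Consider the signed network coordination game on a network (V, W) with external field h and a partition V = R ∪ S (R, S disjoint). Let τ ∈ {−1,+1}^R be such that τ_i W_ij τ_j ≥ 0 for all i, j ∈ R, and let h^+, h^− ∈ ℝ^R be defined by h^+_i = τ_i h_i + w_i^S and h^−_i = τ_i h_i − w_i^S for i ∈ R. Assume the τ-transformed subnetwork (R, W^[τ]_{RR}) with entries τ_i W_ij τ_j is (h^−, h^+)-indecomposable and w_i^R − |h_i| > w_i^S for every i ∈ R. If for each y ∈ {τ, −τ} the set N_S^(y) of Nash equilibria of the S-restricted game with the strategy profile of players in R frozen to y is globally BR-reachable for that restricted game, then the set N̄ = { x* ∈ N : x*_R ∈ {τ, −τ} } of Nash equilibria of the SNC game is nonempty and globally BR-reachable. -/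

import Mathlib

open Finset Function

noncomputable section

/-- The binary action set `A = {−1, +1}`, as a subtype of `ℝ`. -/
abbrev Act : Type := {r : ℝ // r = 1 ∨ r = -1}

def onePt : Act := ⟨1, Or.inl rfl⟩

def negOnePt : Act := ⟨-1, Or.inr rfl⟩

def actMul (a b : Act) : Act :=
  ⟨(a : ℝ) * (b : ℝ), by rcases a.2 with h1 | h1 <;> rcases b.2 with h2 | h2 <;> norm_num [h1, h2]⟩

def actNeg (a : Act) : Act :=
  ⟨-(a : ℝ), by rcases a.2 with h1 | h1 <;> norm_num [h1]⟩

/-- Utility of player `i` in the SNC game on the network `(V, W)` with external field `h`. -/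
def utility {V : Type*} [Fintype V] (W : V → V → ℝ) (h : V → ℝ) (i : V) (x : V → Act) : ℝ :=
  h i * (x i : ℝ) + (x i : ℝ) * ∑ j, W i j * (x j : ℝ)

/-- Best response set of player `i` (depends only on `x_{−i}`). -/
def bestResponse {V : Type*} [Fintype V] [DecidableEq V] (W : V → V → ℝ) (h : V → ℝ)
    (i : V) (x : V → Act) : Set Act :=
  {a | ∀ b : Act, utility W h i (Function.update x i b) ≤ utility W h i (Function.update x i a)}

/-- Nash equilibrium of the SNC game. -/
def IsNash {V : Type*} [Fintype V] [DecidableEq V] (W : V → V → ℝ) (h : V → ℝ)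
    (x : V → Act) : Prop :=
  ∀ i, x i ∈ bestResponse W h i x

/-- One step of a best-response path. -/
def BRStep {V : Type*} [Fintype V] [DecidableEq V] (W : V → V → ℝ) (h : V → ℝ)
    (x y : V → Act) : Prop :=
  ∃ i, (∀ j, j ≠ i → y j = x j) ∧ y i ≠ x i ∧ y i ∈ bestResponse W h i x

def GloballyBRReachable {V : Type*} [Fintype V] [DecidableEq V] (W : V → V → ℝ) (h : V → ℝ)
    (X : Set (V → Act)) : Prop :=
  ∀ x : V → Act, ∃ y ∈ X, Relation.ReflTransGen (BRStep W h) x y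

def BRInvariant {V : Type*} [Fintype V] [DecidableEq V] (W : V → V → ℝ) (h : V → ℝ)
    (X : Set (V → Act)) : Prop :=
  ∀ x ∈ X, ∀ y, Relation.ReflTransGen (BRStep W h) x y → y ∈ X

def GloballyBRStable {V : Type*} [Fintype V] [DecidableEq V] (W : V → V → ℝ) (h : V → ℝ)
    (X : Set (V → Act)) : Prop :=
  GloballyBRReachable W h X ∧ BRInvariant W h X

/-- Structural balance of a signed weight matrix. -/
def StructurallyBalanced {V : Type*} (W : V → V → ℝ) : Prop :=
  ∃ P : Set V, (∀ i j, (i ∈ P ↔ j ∈ P) → 0 ≤ W i j) ∧ (∀ i j, ¬(i ∈ P ↔ j ∈ P) → W i j ≤ 0)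

/-- `(h^−, h^+)`-indecomposability of a network. -/
def Indecomposable {V : Type*} [Fintype V] [DecidableEq V] (W : V → V → ℝ)
    (hm hp : V → ℝ) : Prop :=
  ∀ P M : Finset V, P ∪ M = Finset.univ → Disjoint P M → P.Nonempty → M.Nonempty →
    (∃ i ∈ P, ∑ j ∈ P, |W i j| + hp i < ∑ j ∈ M, |W i j|) ∨
    (∃ i ∈ M, (∑ j ∈ M, |W i j|) - hm i < ∑ j ∈ P, |W i j|)

set_option linter.unusedSectionVars false
set_option linter.unusedVariables false

namespace SNCAux

lemma act_abs (a : Act) : |(a : ℝ)| = 1 := by rcases a.2 with h1 | h1 <;> simp [h1]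

lemma actNeg_coe (a : Act) : ((actNeg a : Act) : ℝ) = -(a : ℝ) := rfl

lemma act_coe_of_ne {a b : Act} (hne : a ≠ b) : (a : ℝ) = -(b : ℝ) := by
  have hab : (a : ℝ) ≠ (b : ℝ) := fun hc => hne (Subtype.ext hc)
  rcases a.2 with h1 | h1 <;> rcases b.2 with h2 | h2 <;> rw [h1, h2] at hab ⊢ <;>
    norm_num at hab <;> norm_num

lemma act_eq_of_ne {a b : Act} (hne : a ≠ b) : a = actNeg b :=
  Subtype.ext (act_coe_of_ne hne)

lemma actNeg_ne (a : Act) : actNeg a ≠ a := by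
  intro hc
  have := congrArg (Subtype.val) hc
  rw [actNeg_coe] at this
  rcases a.2 with h1 | h1 <;> rw [h1] at this <;> norm_num at this

variable {V : Type*} [Fintype V] [DecidableEq V]

lemma mem_bestResponse_iff (W : V → V → ℝ) (h : V → ℝ) (hdiag : ∀ i, W i i = 0)
    (i : V) (x : V → Act) (a : Act) :
    a ∈ bestResponse W h i x ↔ 0 ≤ (a : ℝ) * (h i + ∑ j, W i j * (x j : ℝ)) := by
  have hsum : ∀ b : Act, ∑ j, W i j * ((Function.update x i b j : Act) : ℝ)
      = ∑ j, W i j * (x j : ℝ) := by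
    intro b
    refine Finset.sum_congr rfl fun j _ => ?_
    by_cases hj : j = i
    · subst hj; simp [hdiag]
    · rw [Function.update_of_ne hj]
  have hut : ∀ b : Act, utility W h i (Function.update x i b)
      = (b : ℝ) * (h i + ∑ j, W i j * (x j : ℝ)) := by
    intro b
    unfold utility
    rw [hsum b]
    simp only [Function.update_self]
    ring
  constructor
  · intro ha
    have h2 := ha (actNeg a)
    rw [hut, hut, actNeg_coe] at h2
    nlinarith
  · intro h0 b
    rw [hut, hut]
    rcases a.2 with h1 | h1 <;> rcases b.2 with h2 | h2 <;>
      rw [h1] at h0 ⊢ <;> rw [h2] <;> nlinarith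

/-! ### R-subnetwork machinery -/

def dd (W : V → V → ℝ) (R : Finset V) (i : {i // i ∈ R}) (Q : Finset {i // i ∈ R}) : ℝ :=
  ∑ j ∈ Q, |W i.1 j.1|

def wS (W : V → V → ℝ) (R S : Finset V) (i : {i // i ∈ R}) : ℝ :=
  ∑ j ∈ S, |W i.1 j|

def upSet (R : Finset V) (τ : {i // i ∈ R} → Act) (x : V → Act) : Finset {i // i ∈ R} :=
  Finset.univ.filter (fun i => x i.1 = τ i)

def UpOK (W : V → V → ℝ) (h : V → ℝ) (R S : Finset V) (τ : {i // i ∈ R} → Act)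
    (Q : Finset {i // i ∈ R}) (i : {i // i ∈ R}) : Prop :=
  i ∉ Q ∧ dd W R i Qᶜ - ((τ i : ℝ) * h i.1 - wS W R S i) < dd W R i Q

def DownOK (W : V → V → ℝ) (h : V → ℝ) (R S : Finset V) (τ : {i // i ∈ R} → Act)
    (Q : Finset {i // i ∈ R}) (i : {i // i ∈ R}) : Prop :=
  i ∈ Q ∧ dd W R i Q + ((τ i : ℝ) * h i.1 + wS W R S i) < dd W R i Qᶜ

variable (W : V → V → ℝ) (h : V → ℝ) (R S : Finset V) (τ : {i // i ∈ R} → Act)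

lemma wS_nonneg (i : {i // i ∈ R}) : 0 ≤ wS W R S i :=
  Finset.sum_nonneg fun j _ => abs_nonneg _

lemma dd_mono (i : {i // i ∈ R}) {Q Q' : Finset {i // i ∈ R}} (hQ : Q ⊆ Q') :
    dd W R i Q ≤ dd W R i Q' :=
  Finset.sum_le_sum_of_subset_of_nonneg hQ (fun j _ _ => abs_nonneg _)

lemma dd_erase (hdiag : ∀ i, W i i = 0) (i : {i // i ∈ R}) (Q : Finset {i // i ∈ R}) :
    dd W R i (Q.erase i) = dd W R i Q :=
  Finset.sum_erase _ (by simp [hdiag i.1])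

lemma dd_insert (hdiag : ∀ i, W i i = 0) (i : {i // i ∈ R}) (Q : Finset {i // i ∈ R}) :
    dd W R i (insert i Q) = dd W R i Q :=
  Finset.sum_insert_of_eq_zero_if_notMem (fun _ => by simp [hdiag i.1])

lemma mem_upSet {x : V → Act} {i : {i // i ∈ R}} : i ∈ upSet R τ x ↔ x i.1 = τ i := by
  simp [upSet]

lemma upSet_update_up {x : V → Act} {i : {i // i ∈ R}} :
    upSet R τ (Function.update x i.1 (τ i)) = insert i (upSet R τ x) := by
  ext j
  rw [mem_upSet, Finset.mem_insert, mem_upSet]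
  by_cases hj : j = i
  · subst hj; simp [Function.update_self]
  · have hj1 : j.1 ≠ i.1 := fun hc => hj (Subtype.ext hc)
    rw [Function.update_of_ne hj1]
    simp [hj]

lemma upSet_update_down {x : V → Act} {i : {i // i ∈ R}} :
    upSet R τ (Function.update x i.1 (actNeg (τ i))) = (upSet R τ x).erase i := by
  ext j
  rw [mem_upSet, Finset.mem_erase, mem_upSet]
  by_cases hj : j = i
  · subst hj
    simp [Function.update_self, actNeg_ne (τ j)]
  · have hj1 : j.1 ≠ i.1 := fun hc => hj (Subtype.ext hc)
    rw [Function.update_of_ne hj1]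
    simp [hj]

lemma key (hUnion : R ∪ S = Finset.univ) (hDisj : Disjoint R S)
    (hτ : ∀ i j : {i // i ∈ R}, 0 ≤ (τ i : ℝ) * W i.1 j.1 * (τ j : ℝ))
    (x : V → Act) (i : {i // i ∈ R}) :
    ∃ E : ℝ, |E| ≤ wS W R S i ∧
      (τ i : ℝ) * (h i.1 + ∑ j, W i.1 j * (x j : ℝ)) =
        (τ i : ℝ) * h i.1 + (dd W R i (upSet R τ x) - dd W R i (upSet R τ x)ᶜ) + E := by
  refine ⟨(τ i : ℝ) * ∑ j ∈ S, W i.1 j * (x j : ℝ), ?_, ?_⟩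
  · rw [abs_mul, act_abs, one_mul]
    refine le_trans (Finset.abs_sum_le_sum_abs _ _) ?_
    refine Finset.sum_le_sum fun j _ => ?_
    rw [abs_mul, act_abs, mul_one]
  · have hsplit : ∑ j, W i.1 j * (x j : ℝ)
        = ∑ j ∈ R, W i.1 j * (x j : ℝ) + ∑ j ∈ S, W i.1 j * (x j : ℝ) := by
      rw [← Finset.sum_union hDisj, hUnion]
    have hsub : ∑ j ∈ R, (τ i : ℝ) * (W i.1 j * (x j : ℝ))
        = ∑ j : {i // i ∈ R}, (τ i : ℝ) * (W i.1 j.1 * (x j.1 : ℝ)) :=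
      Finset.sum_subtype R (fun _ => Iff.rfl) _
    have hQ : ∀ j ∈ upSet R τ x, (τ i : ℝ) * (W i.1 j.1 * (x j.1 : ℝ)) = |W i.1 j.1| := by
      intro j hj
      rw [(mem_upSet R τ).mp hj]
      have h0 := hτ i j
      have habs : |(τ i : ℝ) * W i.1 j.1 * (τ j : ℝ)| = |W i.1 j.1| := by
        rw [abs_mul, abs_mul, act_abs, act_abs, one_mul, mul_one]
      rw [← mul_assoc]
      rw [← habs, abs_of_nonneg h0]
    have hQc : ∀ j ∈ (upSet R τ x)ᶜ, (τ i : ℝ) * (W i.1 j.1 * (x j.1 : ℝ)) = -|W i.1 j.1| := by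
      intro j hj
      have hne : x j.1 ≠ τ j := by
        rw [Finset.mem_compl, mem_upSet] at hj; exact hj
      rw [act_coe_of_ne hne]
      have h0 := hτ i j
      have habs : |(τ i : ℝ) * W i.1 j.1 * (τ j : ℝ)| = |W i.1 j.1| := by
        rw [abs_mul, abs_mul, act_abs, act_abs, one_mul, mul_one]
      have : (τ i : ℝ) * (W i.1 j.1 * (τ j : ℝ)) = |W i.1 j.1| := by
        rw [← mul_assoc, ← habs, abs_of_nonneg h0]
      nlinarith [this]
    have hR : (τ i : ℝ) * ∑ j ∈ R, W i.1 j * (x j : ℝ)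
        = dd W R i (upSet R τ x) - dd W R i (upSet R τ x)ᶜ := by
      rw [Finset.mul_sum, hsub, ← Finset.sum_add_sum_compl (upSet R τ x)
        (fun j => (τ i : ℝ) * (W i.1 j.1 * (x j.1 : ℝ)))]
      rw [Finset.sum_congr rfl hQ, Finset.sum_congr rfl hQc]
      rw [Finset.sum_neg_distrib]
      unfold dd
      ring
    rw [hsplit, mul_add, mul_add, hR]
    ring

lemma up_step (hdiag : ∀ i, W i i = 0) (hUnion : R ∪ S = Finset.univ) (hDisj : Disjoint R S)
    (hτ : ∀ i j : {i // i ∈ R}, 0 ≤ (τ i : ℝ) * W i.1 j.1 * (τ j : ℝ))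
    (x : V → Act) (i : {i // i ∈ R}) (hup : UpOK W h R S τ (upSet R τ x) i) :
    BRStep W h x (Function.update x i.1 (τ i)) := by
  obtain ⟨hiQ, hlt⟩ := hup
  have hne : x i.1 ≠ τ i := fun hc => hiQ ((mem_upSet R τ).mpr hc)
  obtain ⟨E, hE, hkey⟩ := key W h R S τ hUnion hDisj hτ x i
  refine ⟨i.1, fun j hj => Function.update_of_ne hj _ _, ?_, ?_⟩
  · rw [Function.update_self]
    exact fun hc => hne hc.symm
  · rw [Function.update_self, mem_bestResponse_iff W h hdiag]
    rw [hkey]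
    have := (abs_le.mp hE).1
    linarith

lemma down_step (hdiag : ∀ i, W i i = 0) (hUnion : R ∪ S = Finset.univ) (hDisj : Disjoint R S)
    (hτ : ∀ i j : {i // i ∈ R}, 0 ≤ (τ i : ℝ) * W i.1 j.1 * (τ j : ℝ))
    (x : V → Act) (i : {i // i ∈ R}) (hdn : DownOK W h R S τ (upSet R τ x) i) :
    BRStep W h x (Function.update x i.1 (actNeg (τ i))) := by
  obtain ⟨hiQ, hlt⟩ := hdn
  have hxi : x i.1 = τ i := (mem_upSet R τ).mp hiQ
  obtain ⟨E, hE, hkey⟩ := key W h R S τ hUnion hDisj hτ x i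
  refine ⟨i.1, fun j hj => Function.update_of_ne hj _ _, ?_, ?_⟩
  · rw [Function.update_self, hxi]
    exact actNeg_ne (τ i)
  · rw [Function.update_self, mem_bestResponse_iff W h hdiag, actNeg_coe, neg_mul]
    have := (abs_le.mp hE).2
    nlinarith
lemma phase2 (hdiag : ∀ i, W i i = 0) (hUnion : R ∪ S = Finset.univ) (hDisj : Disjoint R S)
    (hτ : ∀ i j : {i // i ∈ R}, 0 ≤ (τ i : ℝ) * W i.1 j.1 * (τ j : ℝ)) :
    ∀ n : ℕ, ∀ x : V → Act, (upSet R τ x).card ≤ n →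
      (∀ i, ¬ UpOK W h R S τ (upSet R τ x) i) →
      ∃ y, Relation.ReflTransGen (BRStep W h) x y ∧
        (∀ i, ¬ UpOK W h R S τ (upSet R τ y) i) ∧
        (∀ i, ¬ DownOK W h R S τ (upSet R τ y) i) := by
  intro n
  induction n with
  | zero =>
    intro x hc hU
    refine ⟨x, Relation.ReflTransGen.refl, hU, fun i hdi => ?_⟩
    rw [Nat.le_zero, Finset.card_eq_zero] at hc
    rw [hc] at hdi
    exact absurd hdi.1 (Finset.notMem_empty i)
  | succ n ih =>
    intro x hcard hU
    by_cases hD : ∀ i, ¬ DownOK W h R S τ (upSet R τ x) i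
    · exact ⟨x, Relation.ReflTransGen.refl, hU, hD⟩
    · push_neg at hD
      obtain ⟨i, hdi⟩ := hD
      set Q := upSet R τ x with hQdef
      have hstep := down_step W h R S τ hdiag hUnion hDisj hτ x i hdi
      set x' := Function.update x i.1 (actNeg (τ i)) with hx'def
      have hup' : upSet R τ x' = Q.erase i := upSet_update_down R τ
      -- no UpOK for x'
      have hU' : ∀ j, ¬ UpOK W h R S τ (Q.erase i) j := by
        intro j hj
        obtain ⟨hjQ', hjlt⟩ := hj
        rw [Finset.compl_erase] at hjlt
        by_cases hji : j = i
        · subst hji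
          rw [dd_erase W R hdiag, dd_insert W R hdiag] at hjlt
          have h1 := hdi.2
          have h2 := wS_nonneg W R S j
          linarith
        · have hjQ : j ∉ Q := by
            intro hc
            exact hjQ' (Finset.mem_erase.mpr ⟨hji, hc⟩)
          refine hU j ⟨hjQ, ?_⟩
          have m1 : dd W R j (Q.erase i) ≤ dd W R j Q :=
            dd_mono W R j (Finset.erase_subset i Q)
          have m2 : dd W R j Qᶜ ≤ dd W R j (insert i Qᶜ) :=
            dd_mono W R j (Finset.subset_insert i Qᶜ)
          linarith
      have hcard' : (Q.erase i).card ≤ n := by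
        have := Finset.card_erase_of_mem hdi.1
        omega
      obtain ⟨y, hpath, hy1, hy2⟩ := ih x' (by rw [hup']; exact hcard') (by rw [hup']; exact hU')
      exact ⟨y, Relation.ReflTransGen.head hstep hpath, hy1, hy2⟩

lemma phase1 (hdiag : ∀ i, W i i = 0) (hUnion : R ∪ S = Finset.univ) (hDisj : Disjoint R S)
    (hτ : ∀ i j : {i // i ∈ R}, 0 ≤ (τ i : ℝ) * W i.1 j.1 * (τ j : ℝ)) :
    ∀ n : ℕ, ∀ x : V → Act, Fintype.card {i // i ∈ R} - (upSet R τ x).card ≤ n →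
      ∃ y, Relation.ReflTransGen (BRStep W h) x y ∧
        (∀ i, ¬ UpOK W h R S τ (upSet R τ y) i) := by
  intro n
  induction n with
  | zero =>
    intro x hc
    refine ⟨x, Relation.ReflTransGen.refl, fun i hui => ?_⟩
    have hle : (upSet R τ x).card ≤ Fintype.card {i // i ∈ R} :=
      Finset.card_le_univ _
    have : (upSet R τ x).card = Fintype.card {i // i ∈ R} := by omega
    have huniv : upSet R τ x = Finset.univ := Finset.eq_univ_of_card _ this
    rw [huniv] at hui
    exact hui.1 (Finset.mem_univ i)
  | succ n ih =>
    intro x hcard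
    by_cases hUt : ∀ i, ¬ UpOK W h R S τ (upSet R τ x) i
    · exact ⟨x, Relation.ReflTransGen.refl, hUt⟩
    · push_neg at hUt
      obtain ⟨i, hui⟩ := hUt
      have hstep := up_step W h R S τ hdiag hUnion hDisj hτ x i hui
      set x' := Function.update x i.1 (τ i) with hx'def
      have hup' : upSet R τ x' = insert i (upSet R τ x) := upSet_update_up R τ
      have hcard' : Fintype.card {i // i ∈ R} - (upSet R τ x').card ≤ n := by
        rw [hup', Finset.card_insert_of_notMem hui.1]
        have hle : (insert i (upSet R τ x)).card ≤ Fintype.card {i // i ∈ R} :=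
          Finset.card_le_univ _
        rw [Finset.card_insert_of_notMem hui.1] at hle
        omega
      obtain ⟨y, hpath, hy1⟩ := ih x' hcard'
      exact ⟨y, Relation.ReflTransGen.head hstep hpath, hy1⟩

lemma consensus
    (hind : Indecomposable (fun i j : {i // i ∈ R} => (τ i : ℝ) * W i.1 j.1 * (τ j : ℝ))
      (fun i : {i // i ∈ R} => (τ i : ℝ) * h i.1 - ∑ j ∈ S, |W i.1 j|)
      (fun i : {i // i ∈ R} => (τ i : ℝ) * h i.1 + ∑ j ∈ S, |W i.1 j|))
    (y : V → Act)
    (hU : ∀ i, ¬ UpOK W h R S τ (upSet R τ y) i)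
    (hD : ∀ i, ¬ DownOK W h R S τ (upSet R τ y) i) :
    upSet R τ y = Finset.univ ∨ upSet R τ y = ∅ := by
  by_contra hc
  push_neg at hc
  obtain ⟨h1, h2⟩ := hc
  set Q := upSet R τ y with hQdef
  have hQne : Q.Nonempty := h2
  have hQcne : Qᶜ.Nonempty := by
    rcases Finset.eq_empty_or_nonempty Qᶜ with he | hne
    · exact absurd ((Finset.compl_eq_empty_iff Q).mp he) h1
    · exact hne
  have habs : ∀ i j : {i // i ∈ R}, |(τ i : ℝ) * W i.1 j.1 * (τ j : ℝ)| = |W i.1 j.1| := by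
    intro i j
    rw [abs_mul, abs_mul, act_abs, act_abs, one_mul, mul_one]
  have hres := hind Q Qᶜ (Finset.union_compl Q) (disjoint_compl_right) hQne hQcne
  rcases hres with ⟨i, hiQ, hlt⟩ | ⟨i, hiQc, hlt⟩
  · simp only [habs] at hlt
    exact hD i ⟨hiQ, hlt⟩
  · simp only [habs] at hlt
    exact hU i ⟨Finset.mem_compl.mp hiQc, hlt⟩

/-! ### Freezing `R` and playing on `S` -/

def glue (S : Finset V) (y : V → Act) (u : {i // i ∈ S} → Act) : V → Act :=
  fun v => if hv : v ∈ S then u ⟨v, hv⟩ else y v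

lemma glue_self (y : V → Act) : glue S y (fun i => y i.1) = y := by
  funext v
  by_cases hv : v ∈ S <;> simp [glue, hv]

lemma glue_not_mem (y : V → Act) (u : {i // i ∈ S} → Act) {v : V} (hv : v ∉ S) :
    glue S y u v = y v := by simp [glue, hv]

lemma glue_mem (y : V → Act) (u : {i // i ∈ S} → Act) {v : V} (hv : v ∈ S) :
    glue S y u v = u ⟨v, hv⟩ := by simp [glue, hv]

lemma C_glue (hUnion : R ∪ S = Finset.univ) (hDisj : Disjoint R S)
    (y : V → Act) (yR : {i // i ∈ R} → Act) (hyR : ∀ j : {i // i ∈ R}, y j.1 = yR j)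
    (u : {i // i ∈ S} → Act) (i : V) :
    h i + ∑ j, W i j * ((glue S y u) j : ℝ)
      = (h i + ∑ j : {i // i ∈ R}, W i j.1 * (yR j : ℝ))
        + ∑ j : {i // i ∈ S}, W i j.1 * (u j : ℝ) := by
  have hsplit : ∑ j, W i j * ((glue S y u) j : ℝ)
      = ∑ j ∈ R, W i j * ((glue S y u) j : ℝ) + ∑ j ∈ S, W i j * ((glue S y u) j : ℝ) := by
    rw [← Finset.sum_union hDisj, hUnion]
  have hRpart : ∑ j ∈ R, W i j * ((glue S y u) j : ℝ)
      = ∑ j : {i // i ∈ R}, W i j.1 * (yR j : ℝ) := by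
    rw [Finset.sum_subtype R (fun _ => Iff.rfl) (fun j => W i j * ((glue S y u) j : ℝ))]
    refine Finset.sum_congr rfl fun j _ => ?_
    have hjS : j.1 ∉ S := Finset.disjoint_left.mp hDisj j.2
    rw [glue_not_mem S y u hjS, hyR j]
  have hSpart : ∑ j ∈ S, W i j * ((glue S y u) j : ℝ)
      = ∑ j : {i // i ∈ S}, W i j.1 * (u j : ℝ) := by
    rw [Finset.sum_subtype S (fun _ => Iff.rfl) (fun j => W i j * ((glue S y u) j : ℝ))]
    refine Finset.sum_congr rfl fun j _ => ?_
    rw [glue_mem S y u j.2]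
  rw [hsplit, hRpart, hSpart]
  ring

lemma lift_step (hdiag : ∀ i, W i i = 0) (hUnion : R ∪ S = Finset.univ) (hDisj : Disjoint R S)
    (y : V → Act) (yR : {i // i ∈ R} → Act) (hyR : ∀ j : {i // i ∈ R}, y j.1 = yR j)
    {u u' : {i // i ∈ S} → Act}
    (hst : BRStep (fun i j : {i // i ∈ S} => W i.1 j.1)
      (fun i : {i // i ∈ S} => h i.1 + ∑ j : {i // i ∈ R}, W i.1 j.1 * (yR j : ℝ)) u u') :
    BRStep W h (glue S y u) (glue S y u') := by
  obtain ⟨i, hoff, hne, hbr⟩ := hst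
  refine ⟨i.1, ?_, ?_, ?_⟩
  · intro j hj
    by_cases hjS : j ∈ S
    · have hji : (⟨j, hjS⟩ : {i // i ∈ S}) ≠ i := fun hc => hj (congrArg Subtype.val hc)
      rw [glue_mem S y u hjS, glue_mem S y u' hjS]
      exact hoff _ hji
    · rw [glue_not_mem S y u hjS, glue_not_mem S y u' hjS]
  · rw [glue_mem S y u i.2, glue_mem S y u' i.2]
    exact hne
  · rw [glue_mem S y u' i.2]
    rw [mem_bestResponse_iff W h hdiag, C_glue W h R S hUnion hDisj y yR hyR u i.1]
    have hbr' := (mem_bestResponse_iff (fun i j : {i // i ∈ S} => W i.1 j.1)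
      (fun i : {i // i ∈ S} => h i.1 + ∑ j : {i // i ∈ R}, W i.1 j.1 * (yR j : ℝ))
      (fun j => hdiag j.1) i u (u' i)).mp hbr
    exact hbr'

lemma strict_pos (hdiag : ∀ i, W i i = 0) (hUnion : R ∪ S = Finset.univ) (hDisj : Disjoint R S)
    (hτ : ∀ i j : {i // i ∈ R}, 0 ≤ (τ i : ℝ) * W i.1 j.1 * (τ j : ℝ))
    (hdeg : ∀ i ∈ R, ∑ j ∈ S, |W i j| < (∑ j ∈ R, |W i j|) - |h i|)
    (x : V → Act) (i : {i // i ∈ R}) (hQ : upSet R τ x = Finset.univ) :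
    0 < (τ i : ℝ) * (h i.1 + ∑ j, W i.1 j * (x j : ℝ)) := by
  obtain ⟨E, hE, hkey⟩ := key W h R S τ hUnion hDisj hτ x i
  rw [hkey, hQ, Finset.compl_univ]
  have hdd0 : dd W R i (∅ : Finset {i // i ∈ R}) = 0 := Finset.sum_empty
  have hddu : dd W R i Finset.univ = ∑ j ∈ R, |W i.1 j| :=
    (Finset.sum_subtype R (fun _ => Iff.rfl) (fun j => |W i.1 j|)).symm
  have hws : wS W R S i = ∑ j ∈ S, |W i.1 j| := rfl
  have hdeg' := hdeg i.1 i.2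
  have hτh : -|h i.1| ≤ (τ i : ℝ) * h i.1 := by
    have h1 : |(τ i : ℝ) * h i.1| = |h i.1| := by rw [abs_mul, act_abs, one_mul]
    have h2 := neg_abs_le ((τ i : ℝ) * h i.1)
    linarith
  have hEb := (abs_le.mp hE).1
  rw [hdd0, hddu]
  rw [hws] at hEb
  linarith

lemma strict_neg (hdiag : ∀ i, W i i = 0) (hUnion : R ∪ S = Finset.univ) (hDisj : Disjoint R S)
    (hτ : ∀ i j : {i // i ∈ R}, 0 ≤ (τ i : ℝ) * W i.1 j.1 * (τ j : ℝ))
    (hdeg : ∀ i ∈ R, ∑ j ∈ S, |W i j| < (∑ j ∈ R, |W i j|) - |h i|)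
    (x : V → Act) (i : {i // i ∈ R}) (hQ : upSet R τ x = ∅) :
    (τ i : ℝ) * (h i.1 + ∑ j, W i.1 j * (x j : ℝ)) < 0 := by
  obtain ⟨E, hE, hkey⟩ := key W h R S τ hUnion hDisj hτ x i
  rw [hkey, hQ, Finset.compl_empty]
  have hdd0 : dd W R i (∅ : Finset {i // i ∈ R}) = 0 := Finset.sum_empty
  have hddu : dd W R i Finset.univ = ∑ j ∈ R, |W i.1 j| :=
    (Finset.sum_subtype R (fun _ => Iff.rfl) (fun j => |W i.1 j|)).symm
  have hws : wS W R S i = ∑ j ∈ S, |W i.1 j| := rfl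
  have hdeg' := hdeg i.1 i.2
  have hτh : (τ i : ℝ) * h i.1 ≤ |h i.1| := by
    have h1 : |(τ i : ℝ) * h i.1| = |h i.1| := by rw [abs_mul, act_abs, one_mul]
    have h2 := le_abs_self ((τ i : ℝ) * h i.1)
    linarith
  have hEb := (abs_le.mp hE).2
  rw [hdd0, hddu]
  rw [hws] at hEb
  linarith

end SNCAux

open SNCAux in
theorem stmt15 {V : Type*} [Fintype V] [DecidableEq V] [Nonempty V]
    (W : V → V → ℝ) (h : V → ℝ) (hdiag : ∀ i, W i i = 0)
    (R S : Finset V) (hUnion : R ∪ S = Finset.univ) (hDisj : Disjoint R S)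
    (τ : {i // i ∈ R} → Act)
    (hτ : ∀ i j : {i // i ∈ R}, 0 ≤ (τ i : ℝ) * W i.1 j.1 * (τ j : ℝ))
    (hind : Indecomposable (fun i j : {i // i ∈ R} => (τ i : ℝ) * W i.1 j.1 * (τ j : ℝ))
      (fun i : {i // i ∈ R} => (τ i : ℝ) * h i.1 - ∑ j ∈ S, |W i.1 j|)
      (fun i : {i // i ∈ R} => (τ i : ℝ) * h i.1 + ∑ j ∈ S, |W i.1 j|))
    (hdeg : ∀ i ∈ R, ∑ j ∈ S, |W i j| < (∑ j ∈ R, |W i j|) - |h i|)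
    (hreach : ∀ y : {i // i ∈ R} → Act,
      (y = τ ∨ y = fun j => actNeg (τ j)) →
      GloballyBRReachable (fun i j : {i // i ∈ S} => W i.1 j.1)
        (fun i : {i // i ∈ S} => h i.1 + ∑ j : {i // i ∈ R}, W i.1 j.1 * (y j : ℝ))
        {z : {i // i ∈ S} → Act | IsNash (fun i j : {i // i ∈ S} => W i.1 j.1)
          (fun i : {i // i ∈ S} => h i.1 + ∑ j : {i // i ∈ R}, W i.1 j.1 * (y j : ℝ)) z}) :
    ({x : V → Act | IsNash W h x ∧
        ((∀ i : {i // i ∈ R}, x i.1 = τ i) ∨ (∀ i : {i // i ∈ R}, x i.1 = actNeg (τ i)))}).Nonempty ∧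
    GloballyBRReachable W h
      {x : V → Act | IsNash W h x ∧
        ((∀ i : {i // i ∈ R}, x i.1 = τ i) ∨ (∀ i : {i // i ∈ R}, x i.1 = actNeg (τ i)))} := by
  classical
  have main : GloballyBRReachable W h
      {x : V → Act | IsNash W h x ∧
        ((∀ i : {i // i ∈ R}, x i.1 = τ i) ∨ (∀ i : {i // i ∈ R}, x i.1 = actNeg (τ i)))} := by
    intro x
    obtain ⟨y1, hp1, hU1⟩ := phase1 W h R S τ hdiag hUnion hDisj hτ
      (Fintype.card {i // i ∈ R}) x (Nat.sub_le _ _)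
    obtain ⟨y, hp2, hU, hD⟩ := phase2 W h R S τ hdiag hUnion hDisj hτ
      (upSet R τ y1).card y1 le_rfl hU1
    have hxy : Relation.ReflTransGen (BRStep W h) x y := hp1.trans hp2
    rcases consensus W h R S τ hind y hU hD with hcons | hcons
    · -- x_R = τ
      have hyR : ∀ j : {i // i ∈ R}, y j.1 = τ j := fun j =>
        (mem_upSet R τ).mp (hcons ▸ Finset.mem_univ j)
      obtain ⟨z, hzN, hzpath⟩ := hreach τ (Or.inl rfl) (fun i : {i // i ∈ S} => y i.1)
      have hlift : Relation.ReflTransGen (BRStep W h)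
          (glue S y (fun i => y i.1)) (glue S y z) :=
        Relation.ReflTransGen.lift (glue S y)
          (fun a b hab => lift_step W h R S hdiag hUnion hDisj y τ hyR hab) _ _ hzpath
      rw [glue_self] at hlift
      have hgR : ∀ j : {i // i ∈ R}, glue S y z j.1 = τ j := by
        intro j
        have hjS : j.1 ∉ S := Finset.disjoint_left.mp hDisj j.2
        rw [glue_not_mem S y z hjS, hyR j]
      have hQg : upSet R τ (glue S y z) = Finset.univ := by
        apply Finset.eq_univ_of_forall
        intro j
        rw [mem_upSet]
        exact hgR j
      refine ⟨glue S y z, ⟨?_, Or.inl hgR⟩, hxy.trans hlift⟩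
      intro i
      by_cases hiS : i ∈ S
      · rw [glue_mem S y z hiS, mem_bestResponse_iff W h hdiag,
          C_glue W h R S hUnion hDisj y τ hyR z i]
        exact (mem_bestResponse_iff (fun i j : {i // i ∈ S} => W i.1 j.1)
          (fun i : {i // i ∈ S} => h i.1 + ∑ j : {i // i ∈ R}, W i.1 j.1 * (τ j : ℝ))
          (fun j => hdiag j.1) ⟨i, hiS⟩ z (z ⟨i, hiS⟩)).mp (hzN ⟨i, hiS⟩)
      · have hiR : i ∈ R := by
          have hu := Finset.mem_univ i
          rw [← hUnion] at hu
          rcases Finset.mem_union.mp hu with hr | hs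
          · exact hr
          · exact absurd hs hiS
        rw [mem_bestResponse_iff W h hdiag]
        have hval : glue S y z i = τ ⟨i, hiR⟩ := hgR ⟨i, hiR⟩
        rw [hval]
        exact le_of_lt (strict_pos W h R S τ hdiag hUnion hDisj hτ hdeg
          (glue S y z) ⟨i, hiR⟩ hQg)
    · -- x_R = −τ
      have hyR : ∀ j : {i // i ∈ R}, y j.1 = actNeg (τ j) := by
        intro j
        have hj : j ∉ upSet R τ y := by rw [hcons]; exact Finset.notMem_empty j
        rw [mem_upSet] at hj
        exact act_eq_of_ne hj
      obtain ⟨z, hzN, hzpath⟩ := hreach (fun j => actNeg (τ j)) (Or.inr rfl)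
        (fun i : {i // i ∈ S} => y i.1)
      have hlift : Relation.ReflTransGen (BRStep W h)
          (glue S y (fun i => y i.1)) (glue S y z) :=
        Relation.ReflTransGen.lift (glue S y)
          (fun a b hab => lift_step W h R S hdiag hUnion hDisj y
            (fun j => actNeg (τ j)) hyR hab) _ _ hzpath
      rw [glue_self] at hlift
      have hgR : ∀ j : {i // i ∈ R}, glue S y z j.1 = actNeg (τ j) := by
        intro j
        have hjS : j.1 ∉ S := Finset.disjoint_left.mp hDisj j.2
        rw [glue_not_mem S y z hjS, hyR j]
      have hQg : upSet R τ (glue S y z) = ∅ := by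
        apply Finset.eq_empty_iff_forall_notMem.mpr
        intro j hj
        rw [mem_upSet] at hj
        rw [hgR j] at hj
        exact actNeg_ne (τ j) hj
      refine ⟨glue S y z, ⟨?_, Or.inr hgR⟩, hxy.trans hlift⟩
      intro i
      by_cases hiS : i ∈ S
      · rw [glue_mem S y z hiS, mem_bestResponse_iff W h hdiag,
          C_glue W h R S hUnion hDisj y (fun j => actNeg (τ j)) hyR z i]
        exact (mem_bestResponse_iff (fun i j : {i // i ∈ S} => W i.1 j.1)
          (fun i : {i // i ∈ S} => h i.1 + ∑ j : {i // i ∈ R}, W i.1 j.1 * ((actNeg (τ j) : Act) : ℝ))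
          (fun j => hdiag j.1) ⟨i, hiS⟩ z (z ⟨i, hiS⟩)).mp (hzN ⟨i, hiS⟩)
      · have hiR : i ∈ R := by
          have hu := Finset.mem_univ i
          rw [← hUnion] at hu
          rcases Finset.mem_union.mp hu with hr | hs
          · exact hr
          · exact absurd hs hiS
        rw [mem_bestResponse_iff W h hdiag]
        have hval : glue S y z i = actNeg (τ ⟨i, hiR⟩) := hgR ⟨i, hiR⟩
        rw [hval, actNeg_coe, neg_mul]
        have := strict_neg W h R S τ hdiag hUnion hDisj hτ hdeg
          (glue S y z) ⟨i, hiR⟩ hQg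
        linarith
  refine ⟨?_, main⟩
  obtain ⟨y, hy, _⟩ := main (fun _ => onePt)
  exact ⟨y, hy⟩
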